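/- If (ψ,θ)(τ) is a solution of the collision-manifold system which is not an equilibrium, then the set {τ ∈ ℝ : θ'(τ) = 0} is discrete (isolated) in ℝ. -/

import Mathlib

open Real Set Filter Topology

/-- for a non-equilibrium solution of the collision-manifold flow,
the zeros of `θ'` are isolated in `ℝ`. -/
theorem collision_manifold_theta_zeros_isolated
    (α : ℝ) (hα : 0 < α) (hα2 : α < 2)
    (U : ℝ → ℝ) (hU : ∀ θ, 0 < U θ) (hUsm : ContDiff ℝ 2 U)
    (ψ θ : ℝ → ℝ)
    (hψ : ∀ τ, HasDerivAt ψ ((1 - α / 2) * Real.sqrt (2 * U (θ τ)) * Real.cos (ψ τ) -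
        deriv U (θ τ) * Real.sin (ψ τ) / Real.sqrt (2 * U (θ τ))) τ)
    (hθ : ∀ τ, HasDerivAt θ (Real.sqrt (2 * U (θ τ)) * Real.cos (ψ τ)) τ)
    (hne : ∃ τ₁ τ₂ : ℝ, (ψ τ₁, θ τ₁) ≠ (ψ τ₂, θ τ₂)) :
    ∀ τ₀ : ℝ, deriv θ τ₀ = 0 →
      ∃ ε > 0, ∀ τ : ℝ, τ ≠ τ₀ → |τ - τ₀| < ε → deriv θ τ ≠ 0 := by
  have hsq : ∀ x : ℝ, 0 < Real.sqrt (2 * U x) := fun x =>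
    Real.sqrt_pos.mpr (by have := hU x; linarith)
  -- the autonomous vector field
  set V : ℝ × ℝ → ℝ × ℝ := fun p =>
    ((1 - α / 2) * Real.sqrt (2 * U p.2) * Real.cos p.1 -
        deriv U p.2 * Real.sin p.1 / Real.sqrt (2 * U p.2),
      Real.sqrt (2 * U p.2) * Real.cos p.1) with hV
  have hu : ∀ τ, HasDerivAt (fun τ => (ψ τ, θ τ)) (V (ψ τ, θ τ)) τ := fun τ =>
    (hψ τ).prodMk (hθ τ)
  -- the vector field is C¹ at every point
  have hdU1 : ContDiff ℝ 1 (deriv U) := by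
    have h2 : ((2 : ℕ) : WithTop ℕ∞) = (1 : WithTop ℕ∞) + 1 := by norm_num
    have := hUsm
    rw [show (2 : WithTop ℕ∞) = 1 + 1 by norm_num, contDiff_succ_iff_deriv] at this
    exact this.2.2
  have hVc1 : ∀ p : ℝ × ℝ, ContDiffAt ℝ 1 V p := by
    intro p
    have hU1 : ContDiff ℝ 1 U := hUsm.of_le (by norm_num)
    have h2U : ContDiffAt ℝ 1 (fun q : ℝ × ℝ => 2 * U q.2) p :=
      (ContDiff.mul contDiff_const (hU1.comp contDiff_snd)).contDiffAt
    have hsqrtp : ContDiffAt ℝ 1 (fun q : ℝ × ℝ => Real.sqrt (2 * U q.2)) p :=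
      (Real.contDiffAt_sqrt (ne_of_gt (by have := hU p.2; linarith))).comp p h2U
    have hcosp : ContDiffAt ℝ 1 (fun q : ℝ × ℝ => Real.cos q.1) p :=
      (Real.contDiff_cos.comp contDiff_fst).contDiffAt
    have hsinp : ContDiffAt ℝ 1 (fun q : ℝ × ℝ => Real.sin q.1) p :=
      (Real.contDiff_sin.comp contDiff_fst).contDiffAt
    have hdUp : ContDiffAt ℝ 1 (fun q : ℝ × ℝ => deriv U q.2) p :=
      (hdU1.comp contDiff_snd).contDiffAt
    exact ((((contDiffAt_const.mul hsqrtp).mul hcosp).sub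
      ((hdUp.mul hsinp).div hsqrtp (ne_of_gt (hsq p.2)))).prodMk (hsqrtp.mul hcosp))
  -- if the solution ever sits at an equilibrium, it is constant, contradicting `hne`
  have hcont : Continuous fun τ => (ψ τ, θ τ) :=
    continuous_iff_continuousAt.mpr fun τ => ((hψ τ).continuousAt.prodMk (hθ τ).continuousAt)
  -- if the solution ever sits at an equilibrium, it is constant, contradicting `hne`
  have key : ∀ τc : ℝ, V (ψ τc, θ τc) = 0 → False := by
    intro τc hVc
    set S : Set ℝ := {τ | (ψ τ, θ τ) = (ψ τc, θ τc)} with hS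
    have hclosed : IsClosed S := isClosed_eq hcont continuous_const
    have hopen : IsOpen S := by
      rw [isOpen_iff_mem_nhds]
      intro τ₁ hτ₁
      have hτ₁' : (ψ τ₁, θ τ₁) = (ψ τc, θ τc) := hτ₁
      obtain ⟨K, t, ht, hlip⟩ := (hVc1 (ψ τc, θ τc)).exists_lipschitzOnWith
      have hpre : (fun τ => (ψ τ, θ τ)) ⁻¹' t ∈ 𝓝 τ₁ :=
        hcont.continuousAt.preimage_mem_nhds (by rw [hτ₁']; exact ht)
      obtain ⟨ε, hε, hball⟩ := Metric.mem_nhds_iff.mp hpre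
      have hIoo : Ioo (τ₁ - ε) (τ₁ + ε) ⊆ (fun τ => (ψ τ, θ τ)) ⁻¹' t := by
        intro x hx
        apply hball
        rw [Metric.mem_ball, Real.dist_eq, abs_lt]
        constructor <;> [linarith [hx.1]; linarith [hx.2]]
      have heq : EqOn (fun τ => (ψ τ, θ τ)) (fun _ => (ψ τc, θ τc)) (Ioo (τ₁ - ε) (τ₁ + ε)) := by
        refine ODE_solution_unique_of_mem_Ioo (v := fun _ x => V x) (s := fun _ => t)
          (K := K) (t₀ := τ₁) (a := τ₁ - ε) (b := τ₁ + ε) (fun _ _ => hlip)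
          ⟨by linarith, by linarith⟩ ?_ ?_ hτ₁'
        · intro τ hτ
          exact ⟨hu τ, hIoo hτ⟩
        · intro τ hτ
          refine ⟨?_, mem_of_mem_nhds ht⟩
          simpa [hVc] using hasDerivAt_const τ ((ψ τc, θ τc) : ℝ × ℝ)
      have hsub : Ioo (τ₁ - ε) (τ₁ + ε) ⊆ S := fun x hx => heq hx
      exact Filter.mem_of_superset
        (Ioo_mem_nhds (by linarith : τ₁ - ε < τ₁) (by linarith : τ₁ < τ₁ + ε)) hsub
    have huniv : S = univ := (isClopen_iff.mp ⟨hclosed, hopen⟩).resolve_left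
      (Set.nonempty_iff_ne_empty.mp ⟨τc, rfl⟩)
    obtain ⟨τ₁, τ₂, hne'⟩ := hne
    apply hne'
    have h1 : τ₁ ∈ S := huniv ▸ mem_univ τ₁
    have h2 : τ₂ ∈ S := huniv ▸ mem_univ τ₂
    rw [show ((ψ τ₁, θ τ₁) : ℝ × ℝ) = (ψ τc, θ τc) from h1,
      show ((ψ τ₂, θ τ₂) : ℝ × ℝ) = (ψ τc, θ τc) from h2]
  -- main argument
  intro τ₀ h0
  have hderiv : ∀ τ, deriv θ τ = Real.sqrt (2 * U (θ τ)) * Real.cos (ψ τ) := fun τ =>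
    (hθ τ).deriv
  have hc0 : Real.cos (ψ τ₀) = 0 := by
    have := h0
    rw [hderiv τ₀] at this
    rcases mul_eq_zero.mp this with h | h
    · exact absurd h (ne_of_gt (hsq _))
    · exact h
  have hs1 : Real.sin (ψ τ₀) * Real.sin (ψ τ₀) = 1 := by
    have := Real.sin_sq_add_cos_sq (ψ τ₀)
    nlinarith [hc0]
  by_cases hd : deriv U (θ τ₀) = 0
  · exact absurd (key τ₀ (by simp [hV, hc0, hd, Prod.ext_iff])) (fun h => h)
  · -- nondegenerate zero: cos ∘ ψ has nonzero derivative at τ₀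
    set c : ℝ := deriv U (θ τ₀) / Real.sqrt (2 * U (θ τ₀)) with hcdef
    have hcne : c ≠ 0 := div_ne_zero hd (ne_of_gt (hsq _))
    have hg : HasDerivAt (fun τ => Real.cos (ψ τ)) c τ₀ := by
      have h := (hψ τ₀).cos
      rw [hc0] at h
      convert h using 1
      rw [hcdef]
      have e1 : -Real.sin (ψ τ₀) * ((1 - α / 2) * Real.sqrt (2 * U (θ τ₀)) * 0 -
          deriv U (θ τ₀) * Real.sin (ψ τ₀) / Real.sqrt (2 * U (θ τ₀)))
          = (Real.sin (ψ τ₀) * Real.sin (ψ τ₀)) *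
            (deriv U (θ τ₀) / Real.sqrt (2 * U (θ τ₀))) := by
        ring
      rw [e1, hs1, one_mul]
    have hslope := hasDerivAt_iff_tendsto_slope.mp hg
    have hev : ∀ᶠ τ in 𝓝[≠] τ₀, slope (fun τ => Real.cos (ψ τ)) τ₀ τ ≠ 0 :=
      hslope.eventually_ne hcne
    have hev2 : ∀ᶠ τ in 𝓝[≠] τ₀, Real.cos (ψ τ) ≠ 0 := by
      filter_upwards [hev] with τ hτ hcos
      apply hτ
      simp [slope_def_field, hcos, hc0]
    rw [eventually_nhdsWithin_iff] at hev2
    obtain ⟨ε, hε, hb⟩ := Metric.eventually_nhds_iff.mp hev2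
    refine ⟨ε, hε, fun τ hτ hlt => ?_⟩
    rw [hderiv τ]
    exact mul_ne_zero (ne_of_gt (hsq _)) (hb (by rwa [Real.dist_eq]) hτ)
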